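/- Let (x_n)_{n∈I} be a frame for H, (z_n)_{n∈I} an arbitrary dual frame of (x_n), E = {1,...,k} ⊊ I satisfying the MRC. Define v_n⁰ = z_n and iteratively, for j = 1,...,k: α_n^j = ⟨v_n^{j−1}, x_j⟩ / (1 − ⟨v_j^{j−1}, x_j⟩) and v_n^j = v_n^{j−1} + α_n^j v_j^{j−1} for n ∉ {1,...,j}. If all these sequences are well defined (i.e., ⟨v_j^{j−1}, x_j⟩ ≠ 1 for each j), then for every j from 1 to k, (v_n^j)_{n∉{1,...,j}} is a dual frame of (x_n)_{n∉{1,...,j}}. -/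

import Mathlib

noncomputable section

variable {H : Type*} [NormedAddCommGroup H] [InnerProductSpace ℂ H] [CompleteSpace H]

/-- `(x n)_{n ∈ I}` is a frame for `H` with frame bounds `A`, `B`. -/
def IsFrameOn (x : ℕ → H) (I : Set ℕ) (A B : ℝ) : Prop :=
  0 < A ∧ 0 < B ∧ ∀ h : H,
    Summable (fun n : I => ‖(inner ℂ (x n) h : ℂ)‖ ^ 2) ∧
    A * ‖h‖ ^ 2 ≤ ∑' n : I, ‖(inner ℂ (x n) h : ℂ)‖ ^ 2 ∧
    ∑' n : I, ‖(inner ℂ (x n) h : ℂ)‖ ^ 2 ≤ B * ‖h‖ ^ 2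

/-- `(z n)_{n ∈ I}` is a dual frame of `(x n)_{n ∈ I}`. -/
def IsDualFrameOn (z x : ℕ → H) (I : Set ℕ) : Prop :=
  (∃ A B : ℝ, IsFrameOn z I A B) ∧
  ∀ h : H, HasSum (fun n : I => (inner ℂ (x n) h : ℂ) • z n) h


set_option maxHeartbeats 2000000
set_option linter.all false

theorem indicator_update {M : Type*} [AddCommGroup M] {S : Set ℕ} {m : ℕ} (g : ℕ → M)
    (hm : m ∈ S) : (S \ {m}).indicator g = Function.update (S.indicator g) m 0 := by
  funext n
  by_cases h : n = m
  · subst h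
    rw [Function.update_self, Set.indicator_of_notMem (by simp)]
  · rw [Function.update_of_ne h]
    by_cases hS : n ∈ S
    · rw [Set.indicator_of_mem ((Set.mem_diff n).mpr ⟨hS, by simpa using h⟩),
        Set.indicator_of_mem hS]
    · rw [Set.indicator_of_notMem hS, Set.indicator_of_notMem (fun hc => hS hc.1)]

theorem hasSum_remove {M : Type*} [AddCommGroup M] [TopologicalSpace M] [IsTopologicalAddGroup M]
    {S : Set ℕ} {m : ℕ} (hm : m ∈ S) {g : ℕ → M} {a : M}
    (h : HasSum (fun n : S => g n) a) :
    HasSum (fun n : (S \ {m} : Set ℕ) => g n) (a - g m) := by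
  have h1 : HasSum (S.indicator g) a := (hasSum_subtype_iff_indicator).mp h
  have h2 := h1.update m 0
  rw [← indicator_update g hm] at h2
  have h3 : (0:M) - S.indicator g m + a = a - g m := by
    rw [Set.indicator_of_mem hm]; abel
  rw [h3] at h2
  exact (hasSum_subtype_iff_indicator).mpr h2

theorem recon_step (x w : ℕ → H) (S : Set ℕ) (m : ℕ) (hm : m ∈ S)
    (hrec : ∀ h : H, HasSum (fun n : S => (inner ℂ (x n) h : ℂ) • w n) h)
    (hc : (inner ℂ (x m) (w m) : ℂ) ≠ 1)
    (w' : ℕ → H)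
    (hw' : ∀ n ∈ S \ ({m} : Set ℕ), w' n = w n +
      ((inner ℂ (x m) (w n) : ℂ) / (1 - (inner ℂ (x m) (w m) : ℂ))) • w m)
    (h : H) : HasSum (fun n : (S \ {m} : Set ℕ) => (inner ℂ (x n) h : ℂ) • w' n) h := by
  set c : ℂ := inner ℂ (x m) (w m) with hcdef
  have hδ : (1 : ℂ) - c ≠ 0 := sub_ne_zero.mpr (Ne.symm hc)
  have hA : HasSum (fun n : (S \ {m} : Set ℕ) => (inner ℂ (x n) h : ℂ) • w n)
      (h - (inner ℂ (x m) h : ℂ) • w m) := hasSum_remove (g := fun k => (inner ℂ (x k) h : ℂ) • w k) hm (hrec h)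
  have hL : HasSum (fun n : S => (inner ℂ (x n) h : ℂ) * (inner ℂ (x m) (w n) : ℂ))
      (inner ℂ (x m) h : ℂ) := by
    have := (innerSL ℂ (x m)).hasSum (hrec h)
    simpa only [innerSL_apply_apply, inner_smul_right] using this
  have hB := hasSum_remove (g := fun k => (inner ℂ (x k) h : ℂ) * (inner ℂ (x m) (w k) : ℂ)) hm hL
  have hC := (hB.div_const (1 - c)).smul_const (w m)
  have hsum := hA.add hC
  have hfun : (fun n : (S \ {m} : Set ℕ) => (inner ℂ (x n) h : ℂ) • w n +
      ((inner ℂ (x n) h : ℂ) * (inner ℂ (x m) (w n) : ℂ) / (1 - c)) • w m) =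
      fun n : (S \ {m} : Set ℕ) => (inner ℂ (x n) h : ℂ) • w' n := by
    funext n
    rw [hw' n n.2, smul_add, smul_smul, mul_div_assoc]
  rw [hfun] at hsum
  have hval : h - (inner ℂ (x m) h : ℂ) • w m +
      (((inner ℂ (x m) h : ℂ) - (inner ℂ (x m) h : ℂ) * c) / (1 - c)) • w m = h := by
    have : ((inner ℂ (x m) h : ℂ) - (inner ℂ (x m) h : ℂ) * c) / (1 - c) = (inner ℂ (x m) h : ℂ) := by
      field_simp
    rw [this]
    abel
  rwa [hval] at hsum

theorem sub_bessel {f : ℕ → ℝ} (hf : ∀ n, 0 ≤ f n) {S T : Set ℕ} (hST : S ⊆ T)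
    (h : Summable (fun n : T => f n)) :
    Summable (fun n : S => f n) ∧ ∑' n : S, f n ≤ ∑' n : T, f n := by
  have h' : Summable (T.indicator f) := (summable_subtype_iff_indicator).mp h
  have hle : ∀ n, S.indicator f n ≤ T.indicator f n :=
    fun n => Set.indicator_le_indicator_of_subset hST hf n
  have hS : Summable (S.indicator f) :=
    Summable.of_nonneg_of_le (fun n => Set.indicator_nonneg (fun a _ => hf a) n) hle h'
  refine ⟨(summable_subtype_iff_indicator).mpr hS, ?_⟩
  rw [tsum_subtype, tsum_subtype]
  exact Summable.tsum_le_tsum hle hS h'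


theorem tsum_cs {ι : Type*} {f g : ι → ℝ} (hf : ∀ n, 0 ≤ f n) (hg : ∀ n, 0 ≤ g n)
    (hf2 : Summable (fun n => f n ^ 2)) (hg2 : Summable (fun n => g n ^ 2)) :
    Summable (fun n => f n * g n) ∧
      ∑' n, f n * g n ≤ Real.sqrt (∑' n, f n ^ 2) * Real.sqrt (∑' n, g n ^ 2) := by
  have hsum : Summable (fun n => f n * g n) := by
    refine Summable.of_nonneg_of_le (fun n => mul_nonneg (hf n) (hg n))
      (fun n => ?_) (hf2.add hg2)
    nlinarith [sq_nonneg (f n - g n)]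
  refine ⟨hsum, ?_⟩
  refine Summable.tsum_le_of_sum_le hsum (fun s => ?_)
  have h1 : (∑ i ∈ s, f i * g i) ^ 2 ≤ (∑ i ∈ s, f i ^ 2) * ∑ i ∈ s, g i ^ 2 :=
    Finset.sum_mul_sq_le_sq_mul_sq s f g
  have h2 : (∑ i ∈ s, f i ^ 2) ≤ ∑' n, f n ^ 2 := Summable.sum_le_tsum s (fun n _ => sq_nonneg _) hf2
  have h3 : (∑ i ∈ s, g i ^ 2) ≤ ∑' n, g n ^ 2 := Summable.sum_le_tsum s (fun n _ => sq_nonneg _) hg2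
  have h4 : (∑ i ∈ s, f i * g i) ^ 2 ≤ (∑' n, f n ^ 2) * ∑' n, g n ^ 2 := by
    calc (∑ i ∈ s, f i * g i) ^ 2 ≤ (∑ i ∈ s, f i ^ 2) * ∑ i ∈ s, g i ^ 2 := h1
    _ ≤ (∑' n, f n ^ 2) * ∑' n, g n ^ 2 := by
        apply mul_le_mul h2 h3 (Finset.sum_nonneg fun n _ => sq_nonneg _)
          ((Finset.sum_nonneg fun n _ => sq_nonneg _).trans h2)
  have hs : 0 ≤ ∑ i ∈ s, f i * g i := Finset.sum_nonneg fun n _ => mul_nonneg (hf n) (hg n)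
  rw [← Real.sqrt_mul (tsum_nonneg fun n => sq_nonneg _)]
  exact (Real.le_sqrt hs (mul_nonneg (tsum_nonneg fun n => sq_nonneg _)
    (tsum_nonneg fun n => sq_nonneg _))).mpr h4


theorem frame_step (x w : ℕ → H) (S : Set ℕ) (m : ℕ) (hm : m ∈ S) (Bx Bw : ℝ)
    (hBx : 0 < Bx) (hBw : 0 < Bw)
    (hxS : ∀ h : H, Summable (fun n : S => ‖(inner ℂ (x n) h : ℂ)‖ ^ 2) ∧
      ∑' n : S, ‖(inner ℂ (x n) h : ℂ)‖ ^ 2 ≤ Bx * ‖h‖ ^ 2)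
    (hwS : ∀ h : H, Summable (fun n : S => ‖(inner ℂ (w n) h : ℂ)‖ ^ 2) ∧
      ∑' n : S, ‖(inner ℂ (w n) h : ℂ)‖ ^ 2 ≤ Bw * ‖h‖ ^ 2)
    (hc : (inner ℂ (x m) (w m) : ℂ) ≠ 1)
    (w' : ℕ → H)
    (hw' : ∀ n ∈ S \ ({m} : Set ℕ), w' n = w n +
      ((inner ℂ (x m) (w n) : ℂ) / (1 - (inner ℂ (x m) (w m) : ℂ))) • w m)
    (hrecon : ∀ h : H, HasSum (fun n : (S \ {m} : Set ℕ) => (inner ℂ (x n) h : ℂ) • w' n) h) :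
    ∃ A' B' : ℝ, IsFrameOn w' (S \ {m} : Set ℕ) A' B' := by
  set c : ℂ := inner ℂ (x m) (w m) with hcdef
  have hδ : (1 : ℂ) - c ≠ 0 := sub_ne_zero.mpr (Ne.symm hc)
  set d : ℝ := ‖(1 : ℂ) - c‖ with hddef
  have hd : 0 < d := norm_pos_iff.mpr hδ
  set B' : ℝ := 2 * Bw + 2 * ‖w m‖ ^ 2 * Bw * ‖x m‖ ^ 2 / d ^ 2 with hB'def
  have hB'pos : 0 < B' := by positivity
  refine ⟨1 / Bx, B', one_div_pos.mpr hBx, hB'pos, fun h => ?_⟩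
  -- restrictions of Bessel sums to S \ {m}
  have hsub : (S \ {m} : Set ℕ) ⊆ S := Set.diff_subset
  have hwh := sub_bessel (f := fun k => ‖(inner ℂ (w k) h : ℂ)‖ ^ 2) (fun n => sq_nonneg _) hsub (hwS h).1
  have hwxm := sub_bessel (f := fun k => ‖(inner ℂ (w k) (x m) : ℂ)‖ ^ 2) (fun n => sq_nonneg _) hsub (hwS (x m)).1
  have hxh := sub_bessel (f := fun k => ‖(inner ℂ (x k) h : ℂ)‖ ^ 2) (fun n => sq_nonneg _) hsub (hxS h).1
  set C : ℝ := 2 * ‖w m‖ ^ 2 * ‖h‖ ^ 2 / d ^ 2 with hCdef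
  -- pointwise bound
  have key : ∀ n : (S \ {m} : Set ℕ), ‖(inner ℂ (w' n) h : ℂ)‖ ^ 2 ≤
      2 * ‖(inner ℂ (w n) h : ℂ)‖ ^ 2 + C * ‖(inner ℂ (w n) (x m) : ℂ)‖ ^ 2 := by
    intro n
    rw [hw' n n.2]
    have h1 : (inner ℂ (w n + ((inner ℂ (x m) (w n) : ℂ) / (1 - c)) • w m) h : ℂ) =
        (inner ℂ (w n) h : ℂ) +
          (starRingEnd ℂ) ((inner ℂ (x m) (w n) : ℂ) / (1 - c)) * (inner ℂ (w m) h : ℂ) := by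
      rw [inner_add_left, inner_smul_left]
    rw [h1]
    have h2 : ‖(inner ℂ (w n) h : ℂ) +
        (starRingEnd ℂ) ((inner ℂ (x m) (w n) : ℂ) / (1 - c)) * (inner ℂ (w m) h : ℂ)‖ ≤
        ‖(inner ℂ (w n) h : ℂ)‖ + (‖(inner ℂ (w n) (x m) : ℂ)‖ / d) * (‖w m‖ * ‖h‖) := by
      refine (norm_add_le _ _).trans ?_
      gcongr
      rw [norm_mul, RCLike.norm_conj, norm_div]
      rw [norm_inner_symm]
      exact mul_le_mul_of_nonneg_left (norm_inner_le_norm _ _)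
        (by positivity)
    have h3 : ((‖(inner ℂ (w n) (x m) : ℂ)‖ / d) * (‖w m‖ * ‖h‖)) ^ 2 =
        (‖w m‖ ^ 2 * ‖h‖ ^ 2 / d ^ 2) * ‖(inner ℂ (w n) (x m) : ℂ)‖ ^ 2 := by
      field_simp
    have h4 : ‖(inner ℂ (w n) h : ℂ) +
        (starRingEnd ℂ) ((inner ℂ (x m) (w n) : ℂ) / (1 - c)) * (inner ℂ (w m) h : ℂ)‖ ^ 2 ≤
        (‖(inner ℂ (w n) h : ℂ)‖ + (‖(inner ℂ (w n) (x m) : ℂ)‖ / d) * (‖w m‖ * ‖h‖)) ^ 2 := by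
      have hXnn := norm_nonneg ((inner ℂ (w n) h : ℂ) +
        (starRingEnd ℂ) ((inner ℂ (x m) (w n) : ℂ) / (1 - c)) * (inner ℂ (w m) h : ℂ))
      nlinarith [h2]
    calc ‖(inner ℂ (w n) h : ℂ) +
        (starRingEnd ℂ) ((inner ℂ (x m) (w n) : ℂ) / (1 - c)) * (inner ℂ (w m) h : ℂ)‖ ^ 2
        ≤ (‖(inner ℂ (w n) h : ℂ)‖ + (‖(inner ℂ (w n) (x m) : ℂ)‖ / d) * (‖w m‖ * ‖h‖)) ^ 2 := h4
      _ ≤ 2 * ‖(inner ℂ (w n) h : ℂ)‖ ^ 2 +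
          2 * ((‖(inner ℂ (w n) (x m) : ℂ)‖ / d) * (‖w m‖ * ‖h‖)) ^ 2 := by
          nlinarith [sq_nonneg (‖(inner ℂ (w n) h : ℂ)‖ -
            (‖(inner ℂ (w n) (x m) : ℂ)‖ / d) * (‖w m‖ * ‖h‖))]
      _ = 2 * ‖(inner ℂ (w n) h : ℂ)‖ ^ 2 + C * ‖(inner ℂ (w n) (x m) : ℂ)‖ ^ 2 := by
          rw [h3, hCdef]; ring
  -- summability of the majorant and of the target
  have hmaj : Summable (fun n : (S \ {m} : Set ℕ) =>
      2 * ‖(inner ℂ (w n) h : ℂ)‖ ^ 2 + C * ‖(inner ℂ (w n) (x m) : ℂ)‖ ^ 2) :=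
    (hwh.1.mul_left 2).add (hwxm.1.mul_left C)
  have hsum' : Summable (fun n : (S \ {m} : Set ℕ) => ‖(inner ℂ (w' n) h : ℂ)‖ ^ 2) :=
    Summable.of_nonneg_of_le (fun n => sq_nonneg _) key hmaj
  refine ⟨hsum', ?_, ?_⟩
  · -- lower bound
    rcases eq_or_ne h 0 with h0 | h0
    · have hnn : 0 ≤ ∑' n : (S \ {m} : Set ℕ), ‖(inner ℂ (w' n) h : ℂ)‖ ^ 2 :=
        tsum_nonneg fun n => sq_nonneg _
      rw [h0]
      simpa [h0] using hnn
    · have hnpos : 0 < ‖h‖ := norm_pos_iff.mpr h0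
      have hLsum : HasSum (fun n : (S \ {m} : Set ℕ) =>
          (inner ℂ (x n) h : ℂ) * (inner ℂ h (w' n) : ℂ)) (inner ℂ h h : ℂ) := by
        have := (innerSL ℂ h).hasSum (hrecon h)
        simpa only [innerSL_apply_apply, inner_smul_right] using this
      have hDnn : 0 ≤ ∑' n : (S \ {m} : Set ℕ), ‖(inner ℂ (w' n) h : ℂ)‖ ^ 2 :=
        tsum_nonneg fun n => sq_nonneg _
      have hcs := tsum_cs (f := fun n : (S \ {m} : Set ℕ) => ‖(inner ℂ (x n) h : ℂ)‖)
        (g := fun n : (S \ {m} : Set ℕ) => ‖(inner ℂ (w' n) h : ℂ)‖)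
        (fun n => norm_nonneg _) (fun n => norm_nonneg _) hxh.1 hsum'
      have hnormeq : ∀ n : (S \ {m} : Set ℕ), ‖(inner ℂ (x n) h : ℂ) * (inner ℂ h (w' n) : ℂ)‖ =
          ‖(inner ℂ (x n) h : ℂ)‖ * ‖(inner ℂ (w' n) h : ℂ)‖ := fun n => by
        rw [norm_mul, norm_inner_symm h]
      have hnsum : Summable (fun n : (S \ {m} : Set ℕ) =>
          ‖(inner ℂ (x n) h : ℂ) * (inner ℂ h (w' n) : ℂ)‖) :=
        hcs.1.congr (fun n => (hnormeq n).symm)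
      have hstep1 : ‖(inner ℂ h h : ℂ)‖ ≤ ∑' n : (S \ {m} : Set ℕ),
          ‖(inner ℂ (x n) h : ℂ)‖ * ‖(inner ℂ (w' n) h : ℂ)‖ := by
        rw [← hLsum.tsum_eq]
        calc ‖∑' n : (S \ {m} : Set ℕ), (inner ℂ (x n) h : ℂ) * (inner ℂ h (w' n) : ℂ)‖
            ≤ ∑' n : (S \ {m} : Set ℕ), ‖(inner ℂ (x n) h : ℂ) * (inner ℂ h (w' n) : ℂ)‖ :=
              norm_tsum_le_tsum_norm hnsum
          _ = _ := tsum_congr hnormeq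
      have hself : ‖(inner ℂ h h : ℂ)‖ = ‖h‖ ^ 2 := by
        rw [inner_self_eq_norm_sq_to_K]
        simp [abs_of_nonneg (norm_nonneg h)]
      have hx2 : ∑' n : (S \ {m} : Set ℕ), ‖(inner ℂ (x n) h : ℂ)‖ ^ 2 ≤ Bx * ‖h‖ ^ 2 :=
        hxh.2.trans (hxS h).2
      have hsq1 : Real.sqrt (∑' n : (S \ {m} : Set ℕ), ‖(inner ℂ (x n) h : ℂ)‖ ^ 2) ≤
          Real.sqrt Bx * ‖h‖ := by
        have := Real.sqrt_le_sqrt hx2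
        rwa [Real.sqrt_mul hBx.le, Real.sqrt_sq (norm_nonneg h)] at this
      have hchain : ‖h‖ ^ 2 ≤ (Real.sqrt Bx * ‖h‖) *
          Real.sqrt (∑' n : (S \ {m} : Set ℕ), ‖(inner ℂ (w' n) h : ℂ)‖ ^ 2) := by
        calc ‖h‖ ^ 2 = ‖(inner ℂ h h : ℂ)‖ := hself.symm
          _ ≤ ∑' n : (S \ {m} : Set ℕ), ‖(inner ℂ (x n) h : ℂ)‖ * ‖(inner ℂ (w' n) h : ℂ)‖ :=
              hstep1
          _ ≤ Real.sqrt (∑' n : (S \ {m} : Set ℕ), ‖(inner ℂ (x n) h : ℂ)‖ ^ 2) *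
              Real.sqrt (∑' n : (S \ {m} : Set ℕ), ‖(inner ℂ (w' n) h : ℂ)‖ ^ 2) := hcs.2
          _ ≤ (Real.sqrt Bx * ‖h‖) *
              Real.sqrt (∑' n : (S \ {m} : Set ℕ), ‖(inner ℂ (w' n) h : ℂ)‖ ^ 2) :=
              mul_le_mul_of_nonneg_right hsq1 (Real.sqrt_nonneg _)
      set D : ℝ := ∑' n : (S \ {m} : Set ℕ), ‖(inner ℂ (w' n) h : ℂ)‖ ^ 2 with hDdef
      have h5 : ‖h‖ ≤ Real.sqrt Bx * Real.sqrt D := by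
        have h6 : ‖h‖ * ‖h‖ ≤ (Real.sqrt Bx * Real.sqrt D) * ‖h‖ := by nlinarith [hchain]
        exact le_of_mul_le_mul_right h6 hnpos
      have h7 : ‖h‖ ^ 2 ≤ Bx * D := by
        have h8 := mul_le_mul h5 h5 (norm_nonneg h) (by positivity)
        nlinarith [h8, Real.sq_sqrt hBx.le, Real.sq_sqrt hDnn]
      have hBxinv : Bx * (1 / Bx) = 1 := by field_simp
      nlinarith [h7, hBx, hBxinv, hDnn]
  · -- upper bound
    have hub : ∑' n : (S \ {m} : Set ℕ), ‖(inner ℂ (w' n) h : ℂ)‖ ^ 2 ≤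
        ∑' n : (S \ {m} : Set ℕ),
          (2 * ‖(inner ℂ (w n) h : ℂ)‖ ^ 2 + C * ‖(inner ℂ (w n) (x m) : ℂ)‖ ^ 2) :=
      Summable.tsum_le_tsum key hsum' hmaj
    have heq : ∑' n : (S \ {m} : Set ℕ),
        (2 * ‖(inner ℂ (w n) h : ℂ)‖ ^ 2 + C * ‖(inner ℂ (w n) (x m) : ℂ)‖ ^ 2) =
        2 * (∑' n : (S \ {m} : Set ℕ), ‖(inner ℂ (w n) h : ℂ)‖ ^ 2) +
        C * (∑' n : (S \ {m} : Set ℕ), ‖(inner ℂ (w n) (x m) : ℂ)‖ ^ 2) := by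
      rw [Summable.tsum_add (hwh.1.mul_left 2) (hwxm.1.mul_left C), tsum_mul_left, tsum_mul_left]
    have hT1 : (∑' n : (S \ {m} : Set ℕ), ‖(inner ℂ (w n) h : ℂ)‖ ^ 2) ≤ Bw * ‖h‖ ^ 2 :=
      hwh.2.trans (hwS h).2
    have hT2 : (∑' n : (S \ {m} : Set ℕ), ‖(inner ℂ (w n) (x m) : ℂ)‖ ^ 2) ≤ Bw * ‖x m‖ ^ 2 :=
      hwxm.2.trans (hwS (x m)).2
    have hCnn : 0 ≤ C := by positivity
    calc ∑' n : (S \ {m} : Set ℕ), ‖(inner ℂ (w' n) h : ℂ)‖ ^ 2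
        ≤ 2 * (∑' n : (S \ {m} : Set ℕ), ‖(inner ℂ (w n) h : ℂ)‖ ^ 2) +
          C * (∑' n : (S \ {m} : Set ℕ), ‖(inner ℂ (w n) (x m) : ℂ)‖ ^ 2) := by
          rw [← heq]; exact hub
      _ ≤ 2 * (Bw * ‖h‖ ^ 2) + C * (Bw * ‖x m‖ ^ 2) := by
          gcongr <;> first
            | exact tsum_nonneg fun n => sq_nonneg _
            | skip
      _ = B' * ‖h‖ ^ 2 := by
          rw [hB'def, hCdef]
          field_simp


theorem dual_step (x w : ℕ → H) (S : Set ℕ) (m : ℕ) (hm : m ∈ S) (Bx : ℝ) (hBx : 0 < Bx)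
    (hxS : ∀ h : H, Summable (fun n : S => ‖(inner ℂ (x n) h : ℂ)‖ ^ 2) ∧
      ∑' n : S, ‖(inner ℂ (x n) h : ℂ)‖ ^ 2 ≤ Bx * ‖h‖ ^ 2)
    (hw : IsDualFrameOn w x S)
    (hc : (inner ℂ (x m) (w m) : ℂ) ≠ 1)
    (w' : ℕ → H)
    (hw' : ∀ n ∈ S \ ({m} : Set ℕ), w' n = w n +
      ((inner ℂ (x m) (w n) : ℂ) / (1 - (inner ℂ (x m) (w m) : ℂ))) • w m) :
    IsDualFrameOn w' x (S \ {m} : Set ℕ) := by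
  obtain ⟨⟨Aw, Bw, hAw, hBw, hwfr⟩, hwrec⟩ := hw
  have hwS : ∀ h : H, Summable (fun n : S => ‖(inner ℂ (w n) h : ℂ)‖ ^ 2) ∧
      ∑' n : S, ‖(inner ℂ (w n) h : ℂ)‖ ^ 2 ≤ Bw * ‖h‖ ^ 2 :=
    fun h => ⟨(hwfr h).1, (hwfr h).2.2⟩
  have hrecon := recon_step x w S m hm hwrec hc w' hw'
  exact ⟨frame_step x w S m hm Bx Bw hBx hBw hxS hwS hc w' hw' hrecon, hrecon⟩

/-- Iterative construction: `v 0 n = z n`, and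
`v j n = v (j-1) n + (⟨v (j-1) n, x j⟩ / (1 − ⟨v (j-1) j, x j⟩)) v (j-1) j` for
`n ∉ {1,…,j}`.  If all denominators are nonzero (`⟨v (j-1) j, x j⟩ ≠ 1`), then for
every `j = 1,…,k`, `(v j n)_{n ∈ I \ {1,…,j}}` is a dual frame of `(x n)_{n ∈ I \ {1,…,j}}`. -/
theorem stmt9 (x z : ℕ → H) (I : Set ℕ) (A B : ℝ) (hx : IsFrameOn x I A B)
    (hz : IsDualFrameOn z x I) (k : ℕ)
    (hE : ((Finset.Icc 1 k : Finset ℕ) : Set ℕ) ⊂ I)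
    (hMRC : Dense ((Submodule.span ℂ
      (x '' (I \ (Finset.Icc 1 k : Finset ℕ))) : Submodule ℂ H) : Set H))
    (v : ℕ → ℕ → H) (hv0 : ∀ n, v 0 n = z n)
    (hden : ∀ j ∈ Finset.Icc 1 k, (inner ℂ (x j) (v (j - 1) j) : ℂ) ≠ 1)
    (hrec : ∀ j ∈ Finset.Icc 1 k, ∀ n ∈ I \ ((Finset.Icc 1 j : Finset ℕ) : Set ℕ),
      v j n = v (j - 1) n +
        ((inner ℂ (x j) (v (j - 1) n) : ℂ) / (1 - (inner ℂ (x j) (v (j - 1) j) : ℂ))) •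
          v (j - 1) j) :
    ∀ j ∈ Finset.Icc 1 k,
      IsDualFrameOn (v j) x (I \ ((Finset.Icc 1 j : Finset ℕ) : Set ℕ)) := by
  have hxI : ∀ h : H, Summable (fun n : I => ‖(inner ℂ (x n) h : ℂ)‖ ^ 2) ∧
      ∑' n : I, ‖(inner ℂ (x n) h : ℂ)‖ ^ 2 ≤ B * ‖h‖ ^ 2 :=
    fun h => ⟨(hx.2.2 h).1, (hx.2.2 h).2.2⟩
  have hBpos : 0 < B := hx.2.1
  have main : ∀ j, j ≤ k →
      IsDualFrameOn (v j) x (I \ ((Finset.Icc 1 j : Finset ℕ) : Set ℕ)) := by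
    intro j
    induction j with
    | zero =>
      intro _
      have h0 : ((Finset.Icc 1 0 : Finset ℕ) : Set ℕ) = (∅ : Set ℕ) := by simp
      have hveq : v 0 = z := funext hv0
      rw [h0, Set.diff_empty, hveq]
      exact hz
    | succ j ih =>
      intro hjk
      have hIH := ih (Nat.le_of_succ_le hjk)
      have hmem : (j + 1) ∈ Finset.Icc 1 k :=
        Finset.mem_Icc.mpr ⟨Nat.succ_le_succ (Nat.zero_le j), hjk⟩
      have hmI : (j + 1) ∈ I := hE.1 (Finset.mem_coe.mpr hmem)
      have hmS : (j + 1) ∈ I \ ((Finset.Icc 1 j : Finset ℕ) : Set ℕ) := by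
        refine ⟨hmI, ?_⟩
        simp [Finset.mem_Icc]
      have hset : I \ ((Finset.Icc 1 (j + 1) : Finset ℕ) : Set ℕ) =
          (I \ ((Finset.Icc 1 j : Finset ℕ) : Set ℕ)) \ ({j + 1} : Set ℕ) := by
        ext n
        simp only [Set.mem_diff, Finset.coe_Icc, Set.mem_Icc, Set.mem_singleton_iff]
        constructor
        · rintro ⟨hnI, hn⟩
          exact ⟨⟨hnI, fun hc => hn ⟨hc.1, hc.2.trans (Nat.le_succ j)⟩⟩,
            fun hc => hn (by omega)⟩
        · rintro ⟨⟨hnI, hn⟩, hne⟩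
          exact ⟨hnI, fun hc => hn ⟨hc.1, by omega⟩⟩
      have hSsub : (I \ ((Finset.Icc 1 j : Finset ℕ) : Set ℕ)) ⊆ I := Set.diff_subset
      have hxS : ∀ h : H,
          Summable (fun n : (I \ ((Finset.Icc 1 j : Finset ℕ) : Set ℕ) : Set ℕ) =>
            ‖(inner ℂ (x n) h : ℂ)‖ ^ 2) ∧
          ∑' n : (I \ ((Finset.Icc 1 j : Finset ℕ) : Set ℕ) : Set ℕ),
            ‖(inner ℂ (x n) h : ℂ)‖ ^ 2 ≤ B * ‖h‖ ^ 2 := by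
        intro h
        have hs := sub_bessel (f := fun k => ‖(inner ℂ (x k) h : ℂ)‖ ^ 2)
          (fun n => sq_nonneg _) hSsub (hxI h).1
        exact ⟨hs.1, hs.2.trans (hxI h).2⟩
      have hden' : (inner ℂ (x (j + 1)) (v j (j + 1)) : ℂ) ≠ 1 := by
        simpa using hden (j + 1) hmem
      have hrec' : ∀ n ∈ (I \ ((Finset.Icc 1 j : Finset ℕ) : Set ℕ)) \ ({j + 1} : Set ℕ),
          v (j + 1) n = v j n +
            ((inner ℂ (x (j + 1)) (v j n) : ℂ) /
              (1 - (inner ℂ (x (j + 1)) (v j (j + 1)) : ℂ))) • v j (j + 1) := by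
        intro n hn
        have hn' : n ∈ I \ ((Finset.Icc 1 (j + 1) : Finset ℕ) : Set ℕ) := by
          rw [hset]; exact hn
        simpa using hrec (j + 1) hmem n hn'
      rw [hset]
      exact dual_step x (v j) (I \ ((Finset.Icc 1 j : Finset ℕ) : Set ℕ)) (j + 1) hmS B
        hBpos hxS hIH hden' (v (j + 1)) hrec'
  intro j hj
  exact main j (Finset.mem_Icc.mp hj).2

end
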